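/- Let (E, L, B) be a weakly left-resolving labeled space and let A ∈ B be nonempty. Then the set H(A) := {B ∈ B : B ⊆ r(A, α₁) ∪ ... ∪ r(A, αₙ) for some finite collection of labeled paths α₁, ..., αₙ ∈ L^#(E)} is the smallest hereditary subset of B containing A. -/

import Mathlib

universe u v

variable {V : Type u} {Λ : Type v}

/-- The relative range `r(S, α)` of a set of vertices along a labeled path. -/
def relRange (Edge : V → Λ → V → Prop) : Set V → List Λ → Set V
  | S, [] => S
  | S, a :: α => relRange Edge {w | ∃ u ∈ S, Edge u a w} α

/-- The range `r(α)` of a labeled path. -/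
def lrange (Edge : V → Λ → V → Prop) (α : List Λ) : Set V :=
  relRange Edge Set.univ α

/-- `α` is a (nonempty) labeled path of the labeled graph. -/
def IsLP (Edge : V → Λ → V → Prop) (α : List Λ) : Prop :=
  α ≠ [] ∧ (lrange Edge α).Nonempty

/-- `L(SE¹)`: labels of edges emitted from `S`. -/
def edgeLabels (Edge : V → Λ → V → Prop) (S : Set V) : Set Λ :=
  {a | ∃ u ∈ S, ∃ w, Edge u a w}

/-- `S` is regular: every nonempty `B ∈ ℬ` with `B ⊆ S` emits a finite nonzero set of labels. -/
def RegularSet (Edge : V → Λ → V → Prop) (ℬ : Set (Set V)) (S : Set V) : Prop :=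
  ∀ B ∈ ℬ, B ⊆ S → B.Nonempty →
    (edgeLabels Edge B).Finite ∧ (edgeLabels Edge B).Nonempty

/-- `H ⊆ ℬ` is hereditary. -/
def Hered (Edge : V → Λ → V → Prop) (ℬ H : Set (Set V)) : Prop :=
  H ⊆ ℬ ∧ (∀ A ∈ H, ∀ α : List Λ, IsLP Edge α → relRange Edge A α ∈ H) ∧
    (∀ A ∈ H, ∀ B ∈ H, A ∪ B ∈ H) ∧ (∀ A ∈ H, ∀ B ∈ ℬ, B ⊆ A → B ∈ H)

/-- `H` is saturated. -/
def Satur (Edge : V → Λ → V → Prop) (ℬ H : Set (Set V)) : Prop :=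
  ∀ A ∈ ℬ, RegularSet Edge ℬ A →
    (∀ α : List Λ, IsLP Edge α → relRange Edge A α ∈ H) → A ∈ H

/-- `H(A)`: sets covered by finitely many relative ranges `r(A, αᵢ)`, `αᵢ ∈ L^#(E)`. -/
def HSet (Edge : V → Λ → V → Prop) (ℬ : Set (Set V)) (A : Set V) : Set (Set V) :=
  {B ∈ ℬ | ∃ l : List (List Λ), (∀ α ∈ l, α = [] ∨ IsLP Edge α) ∧
    B ⊆ ⋃ α ∈ l, relRange Edge A α}

/-- `S(H(A))`: the saturation of `H(A)`. -/
def SHSet (Edge : V → Λ → V → Prop) (ℬ : Set (Set V)) (A : Set V) : Set (Set V) :=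
  {B ∈ ℬ | ∃ n : ℕ,
    (∀ β : List Λ, (β = [] ∨ IsLP Edge β) → β.length = n →
      relRange Edge B β ∈ HSet Edge ℬ A) ∧
    (∀ γ : List Λ, (γ = [] ∨ IsLP Edge γ) → γ.length < n →
      ∃ C ∈ HSet Edge ℬ A, ∃ D ∈ ℬ, RegularSet Edge ℬ D ∧ relRange Edge B γ = C ∪ D)}

/-- `ℬ` is an accommodating set for the labeled graph. -/
def Accommodating (Edge : V → Λ → V → Prop) (ℬ : Set (Set V)) : Prop :=
  (∀ α : List Λ, IsLP Edge α → lrange Edge α ∈ ℬ) ∧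
    (∀ A ∈ ℬ, ∀ α : List Λ, IsLP Edge α → relRange Edge A α ∈ ℬ) ∧
    (∀ A ∈ ℬ, ∀ B ∈ ℬ, A ∪ B ∈ ℬ) ∧ (∀ A ∈ ℬ, ∀ B ∈ ℬ, A ∩ B ∈ ℬ)

/-- `ℬ` is non-degenerate: closed under relative complements (and contains `∅`). -/
def NonDegenerate (ℬ : Set (Set V)) : Prop :=
  (∅ : Set V) ∈ ℬ ∧ ∀ A ∈ ℬ, ∀ B ∈ ℬ, A \ B ∈ ℬ

/-- The labeled space is weakly left-resolving. -/
def WLR (Edge : V → Λ → V → Prop) (ℬ : Set (Set V)) : Prop :=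
  ∀ A ∈ ℬ, ∀ B ∈ ℬ, ∀ α : List Λ, IsLP Edge α →
    relRange Edge (A ∩ B) α = relRange Edge A α ∩ relRange Edge B α

/-- `ℬ` is the smallest non-degenerate accommodating set. -/
def SmallestAccom (Edge : V → Λ → V → Prop) (ℬ : Set (Set V)) : Prop :=
  Accommodating Edge ℬ ∧ NonDegenerate ℬ ∧
    ∀ ℬ' : Set (Set V), Accommodating Edge ℬ' → NonDegenerate ℬ' → ℬ ⊆ ℬ'

/-- `x_{[1,n]}`: the length-`n` prefix of an infinite word. -/
def wordPrefix (x : ℕ → Λ) (n : ℕ) : List Λ := List.ofFn fun i : Fin n => x i.val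

/-- `x` lies in the closure of `L(E^∞)`: all finite prefixes are labeled paths. -/
def InfWord (Edge : V → Λ → V → Prop) (x : ℕ → Λ) : Prop :=
  ∀ n : ℕ, 1 ≤ n → IsLP Edge (wordPrefix x n)

/-- Strong cofinality of a labeled space. -/
def StrCofinal (Edge : V → Λ → V → Prop) (ℬ : Set (Set V)) : Prop :=
  ∀ A ∈ ℬ, A.Nonempty → ∀ x : ℕ → Λ, InfWord Edge x →
    ∃ N : ℕ, 1 ≤ N ∧ ∃ l : List (List Λ), (∀ α ∈ l, IsLP Edge α) ∧
      lrange Edge (wordPrefix x N) ⊆ ⋃ α ∈ l, relRange Edge A α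

/-- Minimality: the only hereditary saturated subsets of `ℬ` are `{∅}` and `ℬ`. -/
def MinimalLS (Edge : V → Λ → V → Prop) (ℬ : Set (Set V)) : Prop :=
  ∀ H : Set (Set V), Hered Edge ℬ H → Satur Edge ℬ H → H ⊆ {∅} ∨ H = ℬ

/-- `L(SEⁿ)`: labels of paths of length `n` with source in `S`. -/
def labelsOfLen (Edge : V → Λ → V → Prop) (S : Set V) (n : ℕ) : Set (List Λ) :=
  {β | β.length = n ∧ (relRange Edge S β).Nonempty}

/-- The labeled space is disagreeable. -/
def Disagreeable (Edge : V → Λ → V → Prop) (ℬ : Set (Set V)) : Prop :=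
  ∀ A ∈ ℬ, A.Nonempty → ∀ β : List Λ, IsLP Edge β →
    ∃ n : ℕ, 1 ≤ n ∧ labelsOfLen Edge A (β.length * n) ≠ {(List.replicate n β).flatten}

/-- `(α, A)` is a cycle. -/
def IsCycle (Edge : V → Λ → V → Prop) (ℬ : Set (Set V)) (α : List Λ) (A : Set V) : Prop :=
  IsLP Edge α ∧ A ∈ ℬ ∧ A.Nonempty ∧ ∀ B ∈ ℬ, B ⊆ A → relRange Edge B α = B

/-- The cycle `(α, A)` has an exit. -/
def CycleHasExit (Edge : V → Λ → V → Prop) (ℬ : Set (Set V)) (α : List Λ) (A : Set V) : Prop :=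
  ∃ t : ℕ, 1 ≤ t ∧ t ≤ α.length ∧ ∃ B ∈ ℬ, B.Nonempty ∧
    B ⊆ relRange Edge A (α.take t) ∧
    edgeLabels Edge B ≠ {a : Λ | α[t % α.length]? = some a}

/-- The cycle `(α, A)` has no exits. -/
def CycleNoExit (Edge : V → Λ → V → Prop) (ℬ : Set (Set V)) (α : List Λ) (A : Set V) : Prop :=
  ∀ t : ℕ, 1 ≤ t → t ≤ α.length → ∀ B ∈ ℬ, B.Nonempty →
    B ⊆ relRange Edge A (α.take t) →
    RegularSet Edge ℬ B ∧ edgeLabels Edge B = {a : Λ | α[t % α.length]? = some a}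

/-- Condition (L): every cycle has an exit. -/
def CondL (Edge : V → Λ → V → Prop) (ℬ : Set (Set V)) : Prop :=
  ∀ (α : List Λ) (A : Set V), IsCycle Edge ℬ α A → CycleHasExit Edge ℬ α A

/-- `α` is a loop at `A`. -/
def IsLoop (Edge : V → Λ → V → Prop) (α : List Λ) (A : Set V) : Prop :=
  IsLP Edge α ∧ A ⊆ relRange Edge A α

/-- The loop `(α, A)` has an exit. -/
def LoopHasExit (Edge : V → Λ → V → Prop) (α : List Λ) (A : Set V) : Prop :=
  {β : List Λ | ∃ k : ℕ, 1 ≤ k ∧ k ≤ α.length ∧ β = α.take k} ⊂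
      {β : List Λ | 1 ≤ β.length ∧ β.length ≤ α.length ∧ (relRange Edge A β).Nonempty} ∨
    A ⊂ relRange Edge A α

/-- `β` is an irreducible path: not a repetition of a proper initial path. -/
def IrreduciblePath (β : List Λ) : Prop :=
  ∀ k : ℕ, 1 ≤ k → k < β.length → ∀ m : ℕ, β ≠ (List.replicate m (β.take k)).flatten

/-- The generalized vertex `[v]_l`. -/
def gvClass (Edge : V → Λ → V → Prop) (l : ℕ) (v : V) : Set V :=
  {w | ∀ β : List Λ, 1 ≤ β.length → β.length ≤ l → (v ∈ lrange Edge β ↔ w ∈ lrange Edge β)}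

/-- `s(x)`: sources of infinite paths labeled by `x`. -/
def srcInf (Edge : V → Λ → V → Prop) (x : ℕ → Λ) : Set V :=
  {w | ∃ p : ℕ → V, p 0 = w ∧ ∀ n : ℕ, Edge (p n) (x n) (p (n + 1))}


theorem relRange_append' (Edge : V → Λ → V → Prop) (S : Set V) (α β : List Λ) :
    relRange Edge S (α ++ β) = relRange Edge (relRange Edge S α) β := by
  induction α generalizing S with
  | nil => rfl
  | cons a α ih => exact ih _

theorem relRange_mono' (Edge : V → Λ → V → Prop) {S T : Set V} (h : S ⊆ T) (α : List Λ) :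
    relRange Edge S α ⊆ relRange Edge T α := by
  induction α generalizing S T with
  | nil => exact h
  | cons a α ih =>
    exact ih fun w hw => by obtain ⟨u, hu, he⟩ := hw; exact ⟨u, h hu, he⟩

theorem relRange_union' (Edge : V → Λ → V → Prop) (S T : Set V) (β : List Λ) :
    relRange Edge (S ∪ T) β = relRange Edge S β ∪ relRange Edge T β := by
  induction β generalizing S T with
  | nil => rfl
  | cons a β ih =>
    have h : {w | ∃ u ∈ S ∪ T, Edge u a w}
        = {w | ∃ u ∈ S, Edge u a w} ∪ {w | ∃ u ∈ T, Edge u a w} := by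
      ext w
      simp only [Set.mem_union, Set.mem_setOf_eq, Set.mem_union]
      constructor
      · rintro ⟨u, hu | hu, he⟩
        · exact Or.inl ⟨u, hu, he⟩
        · exact Or.inr ⟨u, hu, he⟩
      · rintro (⟨u, hu, he⟩ | ⟨u, hu, he⟩)
        · exact ⟨u, Or.inl hu, he⟩
        · exact ⟨u, Or.inr hu, he⟩
    show relRange Edge {w | ∃ u ∈ S ∪ T, Edge u a w} β = _
    rw [h, ih]; rfl

theorem relRange_empty' (Edge : V → Λ → V → Prop) (β : List Λ) :
    relRange Edge (∅ : Set V) β = ∅ := by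
  induction β with
  | nil => rfl
  | cons a β ih =>
    have h : {w | ∃ u ∈ (∅ : Set V), Edge u a w} = (∅ : Set V) := by
      ext w; simp
    show relRange Edge {w | ∃ u ∈ (∅ : Set V), Edge u a w} β = ∅
    rw [h, ih]

theorem relRange_biUnion' (Edge : V → Λ → V → Prop) (l : List (List Λ))
    (f : List Λ → Set V) (β : List Λ) :
    relRange Edge (⋃ α ∈ l, f α) β = ⋃ α ∈ l, relRange Edge (f α) β := by
  induction l with
  | nil => simp [relRange_empty']
  | cons γ l ih =>
    have h1 : (⋃ α ∈ γ :: l, f α) = f γ ∪ ⋃ α ∈ l, f α := by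
      simp [List.mem_cons, Set.iUnion_or, Set.iUnion_union_distrib]
    have h2 : (⋃ α ∈ γ :: l, relRange Edge (f α) β)
        = relRange Edge (f γ) β ∪ ⋃ α ∈ l, relRange Edge (f α) β := by
      simp [List.mem_cons, Set.iUnion_or, Set.iUnion_union_distrib]
    rw [h1, h2, relRange_union', ih]

/-- `H(A)` is the smallest hereditary subset of `ℬ` containing `A`. -/
theorem HSet_smallest_hereditary (Edge : V → Λ → V → Prop) (ℬ : Set (Set V))
    (hacc : Accommodating Edge ℬ) (hnd : NonDegenerate ℬ) (hwlr : WLR Edge ℬ)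
    (A : Set V) (hA : A ∈ ℬ) (hAne : A.Nonempty) :
    Hered Edge ℬ (HSet Edge ℬ A) ∧ A ∈ HSet Edge ℬ A ∧
      ∀ H : Set (Set V), Hered Edge ℬ H → A ∈ H → HSet Edge ℬ A ⊆ H := by
  classical
  refine ⟨⟨fun B hB => hB.1, ?_, ?_, ?_⟩, ?_, ?_⟩
  · -- closed under relative ranges
    rintro B ⟨hBℬ, l, hl, hcov⟩ β hβ
    refine ⟨hacc.2.1 B hBℬ β hβ,
      l.filterMap (fun α => if (relRange Edge A (α ++ β)).Nonempty
        then some (α ++ β) else none), ?_, ?_⟩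
    · intro γ hγ
      rw [List.mem_filterMap] at hγ
      obtain ⟨α, hαl, hγ⟩ := hγ
      split_ifs at hγ with hne
      · cases hγ
        refine Or.inr ⟨by simp [hβ.1], ?_⟩
        obtain ⟨x, hx⟩ := hne
        exact ⟨x, relRange_mono' Edge (Set.subset_univ A) _ hx⟩
    · intro x hx
      have hx' : x ∈ relRange Edge (⋃ α ∈ l, relRange Edge A α) β :=
        relRange_mono' Edge hcov β hx
      rw [relRange_biUnion'] at hx'
      simp only [Set.mem_iUnion] at hx'
      obtain ⟨α, hαl, hxα⟩ := hx'
      rw [← relRange_append'] at hxα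
      have hne : (relRange Edge A (α ++ β)).Nonempty := ⟨x, hxα⟩
      simp only [Set.mem_iUnion]
      exact ⟨α ++ β, List.mem_filterMap.2 ⟨α, hαl, by rw [if_pos hne]⟩, hxα⟩
  · -- closed under unions
    rintro B ⟨hBℬ, l₁, hl₁, hc₁⟩ C ⟨hCℬ, l₂, hl₂, hc₂⟩
    refine ⟨hacc.2.2.1 B hBℬ C hCℬ, l₁ ++ l₂, ?_, ?_⟩
    · intro α hα
      rcases List.mem_append.1 hα with h | h
      · exact hl₁ α h
      · exact hl₂ α h
    · rintro x (hx | hx)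
      · obtain ⟨s, hs, hxs⟩ := Set.mem_iUnion₂.1 (hc₁ hx)
        exact Set.mem_iUnion₂.2 ⟨s, List.mem_append.2 (Or.inl hs), hxs⟩
      · obtain ⟨s, hs, hxs⟩ := Set.mem_iUnion₂.1 (hc₂ hx)
        exact Set.mem_iUnion₂.2 ⟨s, List.mem_append.2 (Or.inr hs), hxs⟩
  · -- closed under subsets
    rintro B ⟨hBℬ, l, hl, hcov⟩ C hCℬ hCB
    exact ⟨hCℬ, l, hl, hCB.trans hcov⟩
  · -- A ∈ HSet
    refine ⟨hA, [[]], by simp, ?_⟩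
    intro x hx
    simp only [Set.mem_iUnion]
    exact ⟨[], List.mem_singleton.2 rfl, hx⟩
  · -- smallest
    rintro H ⟨hHℬ, hHrr, hHun, hHsub⟩ hAH B ⟨hBℬ, l, hl, hcov⟩
    have key : ∀ l' : List (List Λ), (∀ α ∈ l', α = [] ∨ IsLP Edge α) →
        A ∪ (⋃ α ∈ l', relRange Edge A α) ∈ H := by
      intro l' hl'
      induction l' with
      | nil => simpa using hAH
      | cons γ t ih =>
        have ht := ih (fun α hα => hl' α (List.mem_cons_of_mem _ hα))
        have hγH : relRange Edge A γ ∈ H := by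
          rcases hl' γ List.mem_cons_self with h | h
          · rw [h]; exact hAH
          · exact hHrr A hAH γ h
        have := hHun _ hγH _ ht
        have heq : relRange Edge A γ ∪ (A ∪ ⋃ α ∈ t, relRange Edge A α)
            = A ∪ ⋃ α ∈ γ :: t, relRange Edge A α := by
          ext x; simp only [Set.mem_union, Set.mem_iUnion, List.mem_cons]
          constructor
          · rintro (h | h | ⟨s, hs, hx⟩)
            · exact Or.inr ⟨γ, Or.inl rfl, h⟩
            · exact Or.inl h
            · exact Or.inr ⟨s, Or.inr hs, hx⟩
          · rintro (h | ⟨s, rfl | hs, hx⟩)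
            · exact Or.inr (Or.inl h)
            · exact Or.inl hx
            · exact Or.inr (Or.inr ⟨s, hs, hx⟩)
        rwa [heq] at this
    exact hHsub _ (key l hl) B hBℬ (hcov.trans Set.subset_union_right)
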